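/- arXiv:2208.14424 — 2 statements merged into one kernel-verified Lean document; each statement's English description precedes it below -/
import Mathlib

section
/- Let 𝐇 be an entropy. Then 𝐇(vv†) = 0 for every pure state, i.e., for every unit vector v ∈ ℂ^n and every n ≥ 1, where vv† denotes the rank-one projection onto v. -/
open Matrix Kronecker BigOperators
open scoped ENNReal ComplexOrder

noncomputable section

/-- A quantum state: a positive semidefinite matrix of trace one. -/
def IsState {α : Type} [Fintype α] (ρ : Matrix α α ℂ) : Prop :=
  ρ.PosSemidef ∧ ρ.trace = 1

/-- The Choi matrix `∑ i j, E i j ⊗ N (E i j)` of a map between matrix algebras. -/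
def choiMatrix {α β : Type} [Fintype α] [DecidableEq α] [Fintype β]
    (N : Matrix α α ℂ → Matrix β β ℂ) : Matrix (α × β) (α × β) ℂ :=
  ∑ i : α, ∑ j : α, Matrix.single i j (1 : ℂ) ⊗ₖ N (Matrix.single i j 1)

/-- A quantum channel: a linear, trace-preserving and completely positive map. -/
def IsChannel {α β : Type} [Fintype α] [DecidableEq α] [Fintype β]
    (N : Matrix α α ℂ → Matrix β β ℂ) : Prop :=
  IsLinearMap ℂ N ∧ (∀ X, (N X).trace = X.trace) ∧ (choiMatrix N).PosSemidef

/-- Partial trace over the first tensor factor. -/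
def trA {α β : Type} [Fintype α] (ρ : Matrix (α × β) (α × β) ℂ) : Matrix β β ℂ :=
  Matrix.of fun j j' => ∑ i : α, ρ (i, j) (i, j')

/-- The uniform (maximally mixed) state of dimension `n`. -/
def unif (n : ℕ) : Matrix (Fin n) (Fin n) ℂ := (n : ℂ)⁻¹ • 1

/-- The tensor extension `M ⊗ id` of a map `M` acting on the first factor. -/
def tensorIdRight {a a' : ℕ} (b : ℕ)
    (M : Matrix (Fin a) (Fin a) ℂ → Matrix (Fin a') (Fin a') ℂ)
    (X : Matrix (Fin a × Fin b) (Fin a × Fin b) ℂ) :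
    Matrix (Fin a' × Fin b) (Fin a' × Fin b) ℂ :=
  Matrix.of fun p q => M (Matrix.of fun k k' => X (k, p.2) (k', q.2)) p.1 q.1

/-- A conditionally unital bipartite channel: it sends every state of the form
`u_A ⊗ ρ_B` to a state of the form `u_C ⊗ σ_{B'}`. -/
def CondUnital {a b c b' : ℕ}
    (N : Matrix (Fin a × Fin b) (Fin a × Fin b) ℂ → Matrix (Fin c × Fin b') (Fin c × Fin b') ℂ) :
    Prop :=
  ∀ ρB : Matrix (Fin b) (Fin b) ℂ, IsState ρB →
    ∃ σ : Matrix (Fin b') (Fin b') ℂ, IsState σ ∧ N (unif a ⊗ₖ ρB) = unif c ⊗ₖ σ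

/-- An `A ↛ B'` semi-causal bipartite channel. -/
def SemiCausal {a b c b' : ℕ}
    (N : Matrix (Fin a × Fin b) (Fin a × Fin b) ℂ → Matrix (Fin c × Fin b') (Fin c × Fin b') ℂ) :
    Prop :=
  ∀ M : Matrix (Fin a) (Fin a) ℂ → Matrix (Fin a) (Fin a) ℂ, IsChannel M →
    ∀ X : Matrix (Fin a × Fin b) (Fin a × Fin b) ℂ,
      trA (N (tensorIdRight b M X)) = trA (N X)

/-- A locally balanced channel: a quantum channel that is both conditionally unital
and `A ↛ B'` semi-causal. -/
def LocallyBalanced {a b c b' : ℕ}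
    (N : Matrix (Fin a × Fin b) (Fin a × Fin b) ℂ → Matrix (Fin c × Fin b') (Fin c × Fin b') ℂ) :
    Prop :=
  IsChannel N ∧ CondUnital N ∧ SemiCausal N

/-- Conditional majorization `ρ ≻_A σ` with respect to the first system. -/
def CondMaj {a b a' b' : ℕ}
    (ρ : Matrix (Fin a × Fin b) (Fin a × Fin b) ℂ)
    (σ : Matrix (Fin a' × Fin b') (Fin a' × Fin b') ℂ) : Prop :=
  (a' ≥ a ∧ ∃ (V : Matrix (Fin a') (Fin a) ℂ)
      (N : Matrix (Fin a × Fin b) (Fin a × Fin b) ℂ →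
           Matrix (Fin a × Fin b') (Fin a × Fin b') ℂ),
      Vᴴ * V = 1 ∧ LocallyBalanced N ∧
      σ = (V ⊗ₖ (1 : Matrix (Fin b') (Fin b') ℂ)) * N ρ *
            (V ⊗ₖ (1 : Matrix (Fin b') (Fin b') ℂ))ᴴ) ∨
  (a ≥ a' ∧ ∃ (U : Matrix (Fin a) (Fin a') ℂ)
      (N : Matrix (Fin a × Fin b) (Fin a × Fin b) ℂ →
           Matrix (Fin a × Fin b') (Fin a × Fin b') ℂ),
      Uᴴ * U = 1 ∧ LocallyBalanced N ∧
      (U ⊗ₖ (1 : Matrix (Fin b') (Fin b') ℂ)) * σ *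
          (U ⊗ₖ (1 : Matrix (Fin b') (Fin b') ℂ))ᴴ = N ρ)

/-- Relaxed conditional majorization `ρ ≻^A σ`: as `CondMaj`, with the locally
balanced channel replaced by a mere conditionally unital channel. -/
def RelCondMaj {a b a' b' : ℕ}
    (ρ : Matrix (Fin a × Fin b) (Fin a × Fin b) ℂ)
    (σ : Matrix (Fin a' × Fin b') (Fin a' × Fin b') ℂ) : Prop :=
  (a' ≥ a ∧ ∃ (V : Matrix (Fin a') (Fin a) ℂ)
      (N : Matrix (Fin a × Fin b) (Fin a × Fin b) ℂ →
           Matrix (Fin a × Fin b') (Fin a × Fin b') ℂ),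
      Vᴴ * V = 1 ∧ (IsChannel N ∧ CondUnital N) ∧
      σ = (V ⊗ₖ (1 : Matrix (Fin b') (Fin b') ℂ)) * N ρ *
            (V ⊗ₖ (1 : Matrix (Fin b') (Fin b') ℂ))ᴴ) ∨
  (a ≥ a' ∧ ∃ (U : Matrix (Fin a) (Fin a') ℂ)
      (N : Matrix (Fin a × Fin b) (Fin a × Fin b) ℂ →
           Matrix (Fin a × Fin b') (Fin a × Fin b') ℂ),
      Uᴴ * U = 1 ∧ (IsChannel N ∧ CondUnital N) ∧
      (U ⊗ₖ (1 : Matrix (Fin b') (Fin b') ℂ)) * σ *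
          (U ⊗ₖ (1 : Matrix (Fin b') (Fin b') ℂ))ᴴ = N ρ)

/-- Reordering `(A × B) × (A' × B') ≃ AA' × BB'`. -/
def sysEquiv (a b a' b' : ℕ) :
    (Fin a × Fin b) × (Fin a' × Fin b') ≃ Fin (a * a') × Fin (b * b') :=
  (Equiv.prodProdProdComm (Fin a) (Fin b) (Fin a') (Fin b')).trans
    (finProdFinEquiv.prodCongr finProdFinEquiv)

/-- The tensor product `ρ_{AB} ⊗ σ_{A'B'}` regarded as a bipartite state with
first system `AA'` and second system `BB'`. -/
def tensorState {a b a' b' : ℕ}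
    (ρ : Matrix (Fin a × Fin b) (Fin a × Fin b) ℂ)
    (σ : Matrix (Fin a' × Fin b') (Fin a' × Fin b') ℂ) :
    Matrix (Fin (a * a') × Fin (b * b')) (Fin (a * a') × Fin (b * b')) ℂ :=
  Matrix.reindex (sysEquiv a b a' b') (sysEquiv a b a' b') (ρ ⊗ₖ σ)

/-- Reindexing of a matrix on a product of `Fin` types as a matrix on a single `Fin` type. -/
def mreindex {a b : ℕ} (ρ : Matrix (Fin a × Fin b) (Fin a × Fin b) ℂ) :
    Matrix (Fin (a * b)) (Fin (a * b)) ℂ :=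
  Matrix.reindex finProdFinEquiv finProdFinEquiv ρ

/-- Majorization `ρ ≻ σ` between states of possibly different dimensions. -/
def Maj {n n' : ℕ} (ρ : Matrix (Fin n) (Fin n) ℂ) (σ : Matrix (Fin n') (Fin n') ℂ) : Prop :=
  (n' ≥ n ∧ ∃ (V : Matrix (Fin n') (Fin n) ℂ)
      (N : Matrix (Fin n) (Fin n) ℂ → Matrix (Fin n) (Fin n) ℂ),
      Vᴴ * V = 1 ∧ IsChannel N ∧ N 1 = 1 ∧ σ = V * N ρ * Vᴴ) ∨
  (n ≥ n' ∧ ∃ (U : Matrix (Fin n) (Fin n') ℂ)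
      (N : Matrix (Fin n) (Fin n) ℂ → Matrix (Fin n) (Fin n) ℂ),
      Uᴴ * U = 1 ∧ IsChannel N ∧ N 1 = 1 ∧ U * σ * Uᴴ = N ρ)

/-- The conditional min-entropy
`H_min(A|B)_ρ = - log₂ min {λ ≥ 0 : λ I_A ⊗ ρ_B - ρ_{AB} ≽ 0}`. -/
def condMinEntropy {a b : ℕ} (ρ : Matrix (Fin a × Fin b) (Fin a × Fin b) ℂ) : ℝ :=
  - Real.logb 2 (sInf {l : ℝ | 0 ≤ l ∧
      (l • ((1 : Matrix (Fin a) (Fin a) ℂ) ⊗ₖ trA ρ) - ρ).PosSemidef})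

/-- The conditional min-entropy `H_min^↑(A|B)_ρ`, optimized over states `σ_B`. -/
def condMinEntropyUp {a b : ℕ} (ρ : Matrix (Fin a × Fin b) (Fin a × Fin b) ℂ) : ℝ :=
  sSup {r : ℝ | ∃ σ : Matrix (Fin b) (Fin b) ℂ, IsState σ ∧
    (∃ l : ℝ, 0 ≤ l ∧ (l • ((1 : Matrix (Fin a) (Fin a) ℂ) ⊗ₖ σ) - ρ).PosSemidef) ∧
    r = - Real.logb 2 (sInf {l : ℝ | 0 ≤ l ∧
      (l • ((1 : Matrix (Fin a) (Fin a) ℂ) ⊗ₖ σ) - ρ).PosSemidef})}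

/-- The maximally entangled state of rank `k` on `ℂ^k ⊗ ℂ^k`. -/
def maxEnt (k : ℕ) : Matrix (Fin k × Fin k) (Fin k × Fin k) ℂ :=
  Matrix.of fun p q => if p.1 = p.2 ∧ q.1 = q.2 then (k : ℂ)⁻¹ else 0

/-- The quantum channel on `m × m` matrices induced by a doubly stochastic matrix `D`,
`ρ ↦ ∑ x x', D x' x * ρ x x • E x' x'`. -/
def dsChannel {m : ℕ} (D : Matrix (Fin m) (Fin m) ℝ) :
    Matrix (Fin m) (Fin m) ℂ → Matrix (Fin m) (Fin m) ℂ :=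
  fun ρ => ∑ x : Fin m, ∑ x' : Fin m,
    (((D x' x : ℝ) : ℂ) * ρ x x) • Matrix.single x' x' (1 : ℂ)

/-- A doubly stochastic matrix: nonnegative entries, all row and column sums equal one. -/
def IsDoublyStochastic {m : ℕ} (D : Matrix (Fin m) (Fin m) ℝ) : Prop :=
  (∀ x x', 0 ≤ D x x') ∧ (∀ x, ∑ x', D x x' = 1) ∧ (∀ x', ∑ x, D x x' = 1)

/-- The tensor product `M ⊗ F` of two (linear) maps between matrix algebras. -/
def tensorMap {m m' n n' : ℕ}
    (M : Matrix (Fin m) (Fin m) ℂ → Matrix (Fin m') (Fin m') ℂ)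
    (F : Matrix (Fin n) (Fin n) ℂ → Matrix (Fin n') (Fin n') ℂ) :
    Matrix (Fin m × Fin n) (Fin m × Fin n) ℂ →
      Matrix (Fin m' × Fin n') (Fin m' × Fin n') ℂ :=
  fun X => ∑ k : Fin m, ∑ k' : Fin m, ∑ l : Fin n, ∑ l' : Fin n,
    X (k, l) (k', l') •
      (M (Matrix.single k k' 1) ⊗ₖ F (Matrix.single l l' 1))

/-- A conditional entropy: a real-valued function on all bipartite states of all finite
dimensions that is not identically zero, reverses conditional majorization, and is
additive on tensor products. -/
structure CondEntropy where
  H : ∀ (a b : ℕ), Matrix (Fin a × Fin b) (Fin a × Fin b) ℂ → ℝ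
  nontrivial : ∃ (a b : ℕ) (ρ : Matrix (Fin a × Fin b) (Fin a × Fin b) ℂ),
    IsState ρ ∧ H a b ρ ≠ 0
  mono : ∀ (a b a' b' : ℕ) (ρ : Matrix (Fin a × Fin b) (Fin a × Fin b) ℂ)
    (σ : Matrix (Fin a' × Fin b') (Fin a' × Fin b') ℂ),
    IsState ρ → IsState σ → CondMaj ρ σ → H a b ρ ≤ H a' b' σ
  additive : ∀ (a b a' b' : ℕ) (ρ : Matrix (Fin a × Fin b) (Fin a × Fin b) ℂ)
    (σ : Matrix (Fin a' × Fin b') (Fin a' × Fin b') ℂ),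
    IsState ρ → IsState σ →
    H (a * a') (b * b') (tensorState ρ σ) = H a b ρ + H a' b' σ

/-- A conditional entropy is normalized if `H(A|B) = 1` on `u⁽²⁾ ⊗ ρ_B`. -/
def CondEntropy.Normalized (E : CondEntropy) : Prop :=
  ∀ (b : ℕ) (ρB : Matrix (Fin b) (Fin b) ℂ), IsState ρB →
    E.H 2 b (unif 2 ⊗ₖ ρB) = 1

/-- A relaxed conditional entropy: as `CondEntropy`, but monotone under the relaxed
conditional majorization. -/
structure RelCondEntropy where
  H : ∀ (a b : ℕ), Matrix (Fin a × Fin b) (Fin a × Fin b) ℂ → ℝ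
  nontrivial : ∃ (a b : ℕ) (ρ : Matrix (Fin a × Fin b) (Fin a × Fin b) ℂ),
    IsState ρ ∧ H a b ρ ≠ 0
  mono : ∀ (a b a' b' : ℕ) (ρ : Matrix (Fin a × Fin b) (Fin a × Fin b) ℂ)
    (σ : Matrix (Fin a' × Fin b') (Fin a' × Fin b') ℂ),
    IsState ρ → IsState σ → RelCondMaj ρ σ → H a b ρ ≤ H a' b' σ
  additive : ∀ (a b a' b' : ℕ) (ρ : Matrix (Fin a × Fin b) (Fin a × Fin b) ℂ)
    (σ : Matrix (Fin a' × Fin b') (Fin a' × Fin b') ℂ),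
    IsState ρ → IsState σ →
    H (a * a') (b * b') (tensorState ρ σ) = H a b ρ + H a' b' σ

/-- A relaxed conditional entropy is normalized if `H(A|B) = 1` on `u⁽²⁾ ⊗ ρ_B`. -/
def RelCondEntropy.Normalized (E : RelCondEntropy) : Prop :=
  ∀ (b : ℕ) (ρB : Matrix (Fin b) (Fin b) ℂ), IsState ρB →
    E.H 2 b (unif 2 ⊗ₖ ρB) = 1

/-- An entropy: a real-valued function on all states of all finite dimensions that is
not identically zero, reverses majorization, and is additive on tensor products. -/
structure Entropy where
  H : ∀ (n : ℕ), Matrix (Fin n) (Fin n) ℂ → ℝ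
  nontrivial : ∃ (n : ℕ) (ρ : Matrix (Fin n) (Fin n) ℂ), IsState ρ ∧ H n ρ ≠ 0
  mono : ∀ (n n' : ℕ) (ρ : Matrix (Fin n) (Fin n) ℂ) (σ : Matrix (Fin n') (Fin n') ℂ),
    IsState ρ → IsState σ → Maj ρ σ → H n ρ ≤ H n' σ
  additive : ∀ (n n' : ℕ) (ρ : Matrix (Fin n) (Fin n) ℂ) (σ : Matrix (Fin n') (Fin n') ℂ),
    IsState ρ → IsState σ → H (n * n') (mreindex (ρ ⊗ₖ σ)) = H n ρ + H n' σ

/-- A relative entropy: an `[0,∞]`-valued function on pairs of states of equal dimension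
that is not identically zero, monotone under quantum channels, and additive on
tensor products. -/
structure RelEntropy where
  D : ∀ (n : ℕ), Matrix (Fin n) (Fin n) ℂ → Matrix (Fin n) (Fin n) ℂ → ℝ≥0∞
  nontrivial : ∃ (n : ℕ) (ρ σ : Matrix (Fin n) (Fin n) ℂ),
    IsState ρ ∧ IsState σ ∧ D n ρ σ ≠ 0
  mono : ∀ (n m : ℕ) (N : Matrix (Fin n) (Fin n) ℂ → Matrix (Fin m) (Fin m) ℂ),
    IsChannel N → ∀ ρ σ : Matrix (Fin n) (Fin n) ℂ,
      IsState ρ → IsState σ → D m (N ρ) (N σ) ≤ D n ρ σ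
  additive : ∀ (n m : ℕ) (ρ σ : Matrix (Fin n) (Fin n) ℂ) (ω τ : Matrix (Fin m) (Fin m) ℂ),
    IsState ρ → IsState σ → IsState ω → IsState τ →
    D (n * m) (mreindex (ρ ⊗ₖ ω)) (mreindex (σ ⊗ₖ τ)) = D n ρ σ + D m ω τ


/-- The conditional entropy `log₂|A| − 𝐃(ρ_{AB} ‖ u_A ⊗ ρ_B)` induced by a relative
entropy `𝐃`, valued in the extended reals. -/
def RelEntropy.condH (Dd : RelEntropy) (a b : ℕ)
    (ρ : Matrix (Fin a × Fin b) (Fin a × Fin b) ℂ) : EReal :=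
  ((Real.logb 2 a : ℝ) : EReal) -
    ((Dd.D (a * b) (mreindex ρ) (mreindex (unif a ⊗ₖ trA ρ)) : ℝ≥0∞) : EReal)


-- auxiliary lemmas
lemma psd_vecMulVec {m : Type} [Fintype m] (v : m → ℂ) :
    (Matrix.vecMulVec v (star v)).PosSemidef := by
  rw [Matrix.vecMulVec_eq (Fin 1), ← Matrix.conjTranspose_replicateCol]
  exact Matrix.posSemidef_self_mul_conjTranspose _

lemma choi_id (α : Type) [Fintype α] [DecidableEq α] :
    choiMatrix (id : Matrix α α ℂ → Matrix α α ℂ) =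
      Matrix.vecMulVec (fun p : α × α => if p.1 = p.2 then 1 else 0)
        (star fun p : α × α => if p.1 = p.2 then 1 else 0) := by
  ext ⟨p1, p2⟩ ⟨q1, q2⟩
  simp [choiMatrix, Matrix.sum_apply, Matrix.kroneckerMap_apply,
    Matrix.single, Matrix.vecMulVec_apply, ite_and, Finset.sum_ite_eq,
    apply_ite, mul_ite, ite_mul, eq_comm]
  split_ifs <;> tauto

lemma isChannel_id (α : Type) [Fintype α] [DecidableEq α] :
    IsChannel (id : Matrix α α ℂ → Matrix α α ℂ) :=
  ⟨⟨fun _ _ => rfl, fun _ _ => rfl⟩, fun _ => rfl,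
    by rw [choi_id]; exact psd_vecMulVec _⟩

lemma isState_one1 : IsState (1 : Matrix (Fin 1) (Fin 1) ℂ) :=
  ⟨Matrix.PosSemidef.one, by simp⟩

/-- Every entropy vanishes on every pure state. -/
theorem entropy_pure_eq_zero (E : Entropy) (n : ℕ) (v : Fin n → ℂ)
    (hv : star v ⬝ᵥ v = 1) :
    E.H n (Matrix.vecMulVec v (star v)) = 0 := by
  have hn : 1 ≤ n := by
    rcases Nat.eq_zero_or_pos n with h | h
    · subst h; simp [dotProduct] at hv
    · exact h
  set ρ := Matrix.vecMulVec v (star v) with hρdef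
  have hρ : IsState ρ := by
    refine ⟨psd_vecMulVec v, ?_⟩
    rw [← hv, hρdef]
    simp [Matrix.trace, Matrix.diag, Matrix.vecMulVec_apply, dotProduct, mul_comm]
  have hσ := isState_one1
  set V := Matrix.replicateCol (Fin 1) v with hVdef
  have hVV : Vᴴ * V = 1 := by
    rw [hVdef, Matrix.conjTranspose_replicateCol]
    ext i j
    simp [Matrix.replicateRow_mul_replicateCol_apply, hv, Fin.ext_iff, Matrix.one_apply, Subsingleton.elim i j]
  have hVVt : V * Vᴴ = ρ := by
    rw [hVdef, Matrix.conjTranspose_replicateCol, hρdef, Matrix.vecMulVec_eq (Fin 1)]; rfl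
  have maj1 : Maj (1 : Matrix (Fin 1) (Fin 1) ℂ) ρ := by
    left
    exact ⟨hn, V, id, hVV, isChannel_id _, rfl, by simp [hVVt]⟩
  have maj2 : Maj ρ (1 : Matrix (Fin 1) (Fin 1) ℂ) := by
    right
    exact ⟨hn, V, id, hVV, isChannel_id _, rfl, by simp [hVVt]⟩
  have le1 := E.mono 1 n 1 ρ hσ hρ maj1
  have le2 := E.mono n 1 ρ 1 hρ hσ maj2
  have hadd := E.additive 1 1 1 1 hσ hσ
  have hmre : mreindex ((1 : Matrix (Fin 1) (Fin 1) ℂ) ⊗ₖ (1 : Matrix (Fin 1) (Fin 1) ℂ)) = 1 := by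
    rw [Matrix.one_kronecker_one]
    simp [mreindex, Matrix.reindex_apply]
  rw [hmre] at hadd
  have h11 : E.H (1 * 1) (1 : Matrix (Fin (1 * 1)) (Fin (1 * 1)) ℂ) =
      E.H 1 (1 : Matrix (Fin 1) (Fin 1) ℂ) := rfl
  rw [h11] at hadd
  linarith
end
end

section
/- Let 𝐇 be a conditional entropy, let ρ_{AB} be a bipartite state, and let 𝒰 be an isometric channel from A to A' and 𝒱 an isometric channel from B to B'. Then 𝐇(A'|B')_{(𝒰⊗𝒱)(ρ_{AB})} = 𝐇(A|B)_{ρ_{AB}}. -/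
open Matrix Kronecker BigOperators
open scoped ENNReal ComplexOrder

noncomputable section

set_option linter.unusedSectionVars false
section Aux
variable {α β γ δ : Type} [Fintype α] [Fintype β] [Fintype γ] [Fintype δ]

lemma posSemidef_iff_eq_ct_mul_self {M : Matrix α α ℂ} :
    M.PosSemidef ↔ ∃ B : Matrix α α ℂ, M = Bᴴ * B := by
  classical
  constructor
  · intro h
    open scoped MatrixOrder in
    obtain ⟨B, hB⟩ := CStarAlgebra.nonneg_iff_eq_star_mul_self.mp h.nonneg
    exact ⟨B, hB⟩
  · rintro ⟨B, rfl⟩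
    exact Matrix.posSemidef_conjTranspose_mul_self B

lemma kron_conjT (A : Matrix α β ℂ) (B : Matrix γ δ ℂ) :
    (A ⊗ₖ B)ᴴ = Aᴴ ⊗ₖ Bᴴ := by
  ext ⟨i,j⟩ ⟨k,l⟩; simp [Matrix.conjTranspose_apply]

lemma choi_apply [DecidableEq α] (N : Matrix α α ℂ → Matrix β β ℂ) (p q : α × β) :
    choiMatrix N p q = N (Matrix.single p.1 q.1 1) p.2 q.2 := by
  obtain ⟨i, x⟩ := p; obtain ⟨j, y⟩ := q
  simp only [choiMatrix, Matrix.sum_apply, Matrix.kroneckerMap_apply]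
  rw [Finset.sum_eq_single i, Finset.sum_eq_single j]
  · simp [Matrix.single]
  · intro k _ hk
    exact mul_eq_zero.2 (Or.inl (Matrix.single_apply_of_ne _ _ _ _ _ (by tauto)))
  · simp
  · intro k _ hk
    refine Finset.sum_eq_zero fun l _ => ?_
    exact mul_eq_zero.2 (Or.inl (Matrix.single_apply_of_ne _ _ _ _ _ (by tauto)))
  · simp

lemma psd_of_rank_one (u : α → ℂ) :
    (Matrix.of fun p q => u p * star (u q)).PosSemidef := by
  refine Matrix.PosSemidef.of_dotProduct_mulVec_nonneg ?_ ?_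
  · ext p q
    simp [Matrix.conjTranspose_apply, mul_comm]
  · intro x
    have : (Matrix.of fun p q => u p * star (u q)) *ᵥ x =
        fun p => u p * (∑ q, star (u q) * x q) := by
      ext p
      simp [Matrix.mulVec, dotProduct, Finset.mul_sum, mul_assoc]
    rw [this]
    set z := ∑ q, star (u q) * x q with hz
    have h1 : star x ⬝ᵥ (fun p => u p * z) = (∑ p, star (x p) * u p) * z := by
      simp [dotProduct, Finset.sum_mul, mul_assoc]
    have h2 : (∑ p, star (x p) * u p) = star z := by
      rw [hz, star_sum]
      exact Finset.sum_congr rfl fun p _ => by rw [star_mul', star_star]; ring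
    rw [h1, h2]
    exact star_mul_self_nonneg z

lemma choi_kraus_eq [DecidableEq α] (K : Matrix β α ℂ) :
    choiMatrix (fun X => K * X * Kᴴ) =
      Matrix.of fun p q => K p.2 p.1 * star (K q.2 q.1) := by
  ext p q
  rw [choi_apply]
  simp only [Matrix.mul_apply, Matrix.conjTranspose_apply, Matrix.of_apply]
  have h : ∀ x1, (∑ j1, K p.2 j1 * Matrix.single p.1 q.1 1 j1 x1) =
      if q.1 = x1 then K p.2 p.1 else 0 := by
    intro x1
    rw [Finset.sum_eq_single p.1]
    · by_cases h : q.1 = x1 <;> simp [Matrix.single, h]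
    · intro k _ hk
      exact mul_eq_zero.2 (Or.inr (Matrix.single_apply_of_ne _ _ _ _ _ (by tauto)))
    · simp
  simp only [h, ite_mul, zero_mul]
  simp

lemma choi_kraus_psd [DecidableEq α] (K : Matrix β α ℂ) :
    (choiMatrix (fun (X : Matrix α α ℂ) => K * X * Kᴴ)).PosSemidef := by
  rw [choi_kraus_eq]
  exact psd_of_rank_one _

lemma choi_add [DecidableEq α] (N M : Matrix α α ℂ → Matrix β β ℂ) :
    choiMatrix (fun X => N X + M X) = choiMatrix N + choiMatrix M := by
  ext p q
  rw [Matrix.add_apply, choi_apply, choi_apply, choi_apply]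
  rfl

lemma choi_traceMap [DecidableEq α] (P : Matrix α α ℂ) (σ : Matrix β β ℂ) :
    choiMatrix (fun X => (P * X).trace • σ) = Pᵀ ⊗ₖ σ := by
  ext p q
  rw [choi_apply]
  have : (P * Matrix.single p.1 q.1 1).trace = P q.1 p.1 := by
    rw [Matrix.trace]
    rw [Finset.sum_eq_single q.1]
    · rw [Matrix.diag_apply, Matrix.mul_apply, Finset.sum_eq_single p.1]
      · simp [Matrix.single]
      · intro k _ hk
        exact mul_eq_zero.2 (Or.inr (Matrix.single_apply_of_ne _ _ _ _ _ (by tauto)))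
      · simp
    · intro k _ hk
      rw [Matrix.diag_apply, Matrix.mul_apply]
      refine Finset.sum_eq_zero fun l _ => ?_
      exact mul_eq_zero.2 (Or.inr (Matrix.single_apply_of_ne _ _ _ _ _ (by tauto)))
    · simp
  rw [this]
  simp [Matrix.kroneckerMap_apply, Matrix.transpose_apply]

lemma kron_psd {P : Matrix α α ℂ} {σ : Matrix β β ℂ}
    (hP : P.PosSemidef) (hσ : σ.PosSemidef) : (P ⊗ₖ σ).PosSemidef := by
  classical
  obtain ⟨Q, rfl⟩ := posSemidef_iff_eq_ct_mul_self.mp hP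
  obtain ⟨R, rfl⟩ := posSemidef_iff_eq_ct_mul_self.mp hσ
  rw [Matrix.mul_kronecker_mul, ← kron_conjT]
  exact Matrix.posSemidef_conjTranspose_mul_self _

lemma psd_trace_nonneg {M : Matrix α α ℂ} (h : M.PosSemidef) : 0 ≤ M.trace := by
  classical
  rw [Matrix.trace]
  refine Finset.sum_nonneg fun i _ => ?_
  have := h.dotProduct_mulVec_nonneg (Pi.single i 1)
  simpa [dotProduct, Matrix.mulVec, Pi.single_apply] using this

lemma psd_mul_trace_nonneg {P ρ' : Matrix α α ℂ}
    (hP : P.PosSemidef) (hρ : ρ'.PosSemidef) : 0 ≤ (P * ρ').trace := by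
  classical
  obtain ⟨Q, rfl⟩ := posSemidef_iff_eq_ct_mul_self.mp hP
  rw [mul_assoc, Matrix.trace_mul_comm]
  exact psd_trace_nonneg (hρ.mul_mul_conjTranspose_same Q)

lemma trA_add (X Y : Matrix (α × β) (α × β) ℂ) : trA (X + Y) = trA X + trA Y := by
  ext j j'; simp [trA, Finset.sum_add_distrib]

lemma trA_smul (c : ℂ) (X : Matrix (α × β) (α × β) ℂ) : trA (c • X) = c • trA X := by
  ext j j'; simp [trA, Finset.mul_sum]

lemma trace_trA (X : Matrix (α × β) (α × β) ℂ) : (trA X).trace = X.trace := by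
  have hX : X.trace = ∑ i : α, ∑ j : β, X (i, j) (i, j) := by
    rw [Matrix.trace, Fintype.sum_prod_type]; rfl
  rw [hX, Finset.sum_comm]
  rfl

lemma one_kron_mul [DecidableEq α] (W : Matrix γ β ℂ) (X : Matrix (α × β) δ ℂ) :
    ((1 : Matrix α α ℂ) ⊗ₖ W) * X = Matrix.of fun p q => ∑ l, W p.2 l * X (p.1, l) q := by
  ext ⟨i, j⟩ q
  simp [Matrix.mul_apply, Fintype.sum_prod_type, Matrix.one_apply, ite_mul]

lemma mul_one_kron_conjT [DecidableEq α] (W : Matrix γ β ℂ) (Y : Matrix δ (α × β) ℂ)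
    {q : α × γ} {p : δ} :
    (Y * ((1 : Matrix α α ℂ) ⊗ₖ W)ᴴ) p q = ∑ l, Y p (q.1, l) * star (W q.2 l) := by
  simp [Matrix.mul_apply, Fintype.sum_prod_type, Matrix.one_apply, Matrix.conjTranspose_apply,
    eq_comm, mul_ite, apply_ite (starRingEnd ℂ), mul_zero, Finset.sum_ite_eq']

lemma trA_conj [DecidableEq α] (W : Matrix γ β ℂ) (X : Matrix (α × β) (α × β) ℂ) :
    trA (((1 : Matrix α α ℂ) ⊗ₖ W) * X * ((1 : Matrix α α ℂ) ⊗ₖ W)ᴴ) = W * trA X * Wᴴ := by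
  ext j j'
  have h : ∀ i, (((1 : Matrix α α ℂ) ⊗ₖ W) * X * ((1 : Matrix α α ℂ) ⊗ₖ W)ᴴ) (i, j) (i, j') =
      ∑ l', (∑ l, W j l * X (i, l) (i, l')) * star (W j' l') := by
    intro i
    rw [mul_one_kron_conjT]
    exact Finset.sum_congr rfl fun l' _ => by rw [one_kron_mul]; rfl
  show ∑ i, (((1 : Matrix α α ℂ) ⊗ₖ W) * X * ((1 : Matrix α α ℂ) ⊗ₖ W)ᴴ) (i, j) (i, j') = _
  simp only [h]
  have hr : (W * trA X * Wᴴ) j j' = ∑ l', (∑ l, W j l * (∑ i, X (i, l) (i, l'))) * star (W j' l') := by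
    rw [Matrix.mul_apply]
    refine Finset.sum_congr rfl fun l' _ => ?_
    rw [Matrix.mul_apply, Matrix.conjTranspose_apply]
    rfl
  rw [hr, Finset.sum_comm]
  refine Finset.sum_congr rfl fun l' _ => ?_
  rw [← Finset.sum_mul, Finset.sum_comm]
  congr 1
  refine Finset.sum_congr rfl fun l _ => ?_
  rw [Finset.mul_sum]

lemma trace_one_kron_mul [DecidableEq α] (Q : Matrix β β ℂ) (X : Matrix (α × β) (α × β) ℂ) :
    (((1 : Matrix α α ℂ) ⊗ₖ Q) * X).trace = (Q * trA X).trace := by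
  have hX : (((1 : Matrix α α ℂ) ⊗ₖ Q) * X).trace
      = ∑ i : α, ∑ j : β, (((1 : Matrix α α ℂ) ⊗ₖ Q) * X) (i, j) (i, j) := by
    rw [Matrix.trace, Fintype.sum_prod_type]; rfl
  rw [hX, Finset.sum_comm, Matrix.trace]
  refine Finset.sum_congr rfl fun j _ => ?_
  rw [Matrix.diag_apply, Matrix.mul_apply]
  have : ∀ i : α, (((1 : Matrix α α ℂ) ⊗ₖ Q) * X) (i, j) (i, j) = ∑ l, Q j l * X (i, l) (i, j) := by
    intro i; rw [one_kron_mul]; rfl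
  simp only [Matrix.diag_apply, this]
  rw [Finset.sum_comm]
  refine Finset.sum_congr rfl fun l _ => ?_
  exact (Finset.mul_sum _ _ _).symm

lemma trA_kron (A : Matrix α α ℂ) (B : Matrix β β ℂ) :
    trA (A ⊗ₖ B) = A.trace • B := by
  ext j j'
  simp [trA, Matrix.trace, Finset.sum_mul]

lemma unif_isState {n : ℕ} (hn : 0 < n) : IsState (unif n) := by
  have hc : (0 : ℂ) ≤ (n : ℂ)⁻¹ := by
    rw [show ((n : ℂ))⁻¹ = (((n : ℝ)⁻¹ : ℝ) : ℂ) by push_cast; ring]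
    exact Complex.zero_le_real.2 (by positivity)
  constructor
  · rw [unif]
    have h1 : ((n : ℂ)⁻¹ • (1 : Matrix (Fin n) (Fin n) ℂ)) =
        Matrix.diagonal (fun _ => (n : ℂ)⁻¹) := by
      ext i j
      by_cases h : i = j <;> simp [Matrix.one_apply, Matrix.diagonal_apply, h]
    rw [h1]
    exact Matrix.PosSemidef.diagonal fun i => hc
  · simp [unif, Matrix.trace_smul, Matrix.trace_one]
    field_simp

lemma trace_unif {n : ℕ} (hn : 0 < n) : (unif n).trace = 1 := (unif_isState hn).2

lemma isometry_dim_le {a a' : ℕ} (V : Matrix (Fin a') (Fin a) ℂ) (hV : Vᴴ * V = 1) :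
    a ≤ a' := by
  have hinj : Function.Injective V.mulVecLin := by
    intro x y hxy
    have : (Vᴴ * V).mulVec x = (Vᴴ * V).mulVec y := by
      rw [← Matrix.mulVec_mulVec, ← Matrix.mulVec_mulVec]
      exact congrArg _ hxy
    simpa [hV] using this
  have := LinearMap.finrank_le_finrank_of_injective hinj
  simpa using this

lemma pos_dims {a b : ℕ} {ρ : Matrix (Fin a × Fin b) (Fin a × Fin b) ℂ}
    (hρ : IsState ρ) : 0 < a ∧ 0 < b := by
  have hne : Nonempty (Fin a × Fin b) := by
    by_contra h
    rw [not_nonempty_iff] at h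
    have : ρ.trace = 0 := by
      rw [Matrix.trace]
      exact Finset.sum_of_isEmpty _
    rw [hρ.2] at this
    exact one_ne_zero this
  obtain ⟨p⟩ := hne
  exact ⟨p.1.pos, p.2.pos⟩

lemma psd_smul {c : ℂ} (hc : 0 ≤ c) {M : Matrix α α ℂ} (hM : M.PosSemidef) :
    (c • M).PosSemidef := by
  have hcs : star c = c := by
    rw [Complex.star_def, Complex.conj_eq_iff_im]
    exact ((Complex.le_def.mp hc).2).symm
  refine Matrix.PosSemidef.of_dotProduct_mulVec_nonneg ?_ ?_
  · rw [Matrix.IsHermitian, Matrix.conjTranspose_smul, hcs, hM.1]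
  · intro x
    rw [Matrix.smul_mulVec, dotProduct_smul, smul_eq_mul]
    exact mul_nonneg hc (hM.dotProduct_mulVec_nonneg x)

lemma trA_tensorIdRight {a b : ℕ} (M : Matrix (Fin a) (Fin a) ℂ → Matrix (Fin a) (Fin a) ℂ)
    (hM : ∀ X, (M X).trace = X.trace) (X : Matrix (Fin a × Fin b) (Fin a × Fin b) ℂ) :
    trA (tensorIdRight b M X) = trA X := by
  ext j j'
  have h := hM (Matrix.of fun k k' => X (k, j) (k', j'))
  simpa [trA, tensorIdRight, Matrix.trace, Matrix.diag] using h

lemma one_kron_conjT {n : ℕ} (W : Matrix γ β ℂ) :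
    ((1 : Matrix (Fin n) (Fin n) ℂ) ⊗ₖ W)ᴴ = (1 : Matrix (Fin n) (Fin n) ℂ) ⊗ₖ Wᴴ := by
  rw [kron_conjT, Matrix.conjTranspose_one]

lemma lb_kraus {a b b' : ℕ} (W : Matrix (Fin b') (Fin b) ℂ) (hW : Wᴴ * W = 1) :
    LocallyBalanced (a := a) (b := b) (c := a) (b' := b')
      (fun X => ((1 : Matrix (Fin a) (Fin a) ℂ) ⊗ₖ W) * X *
        ((1 : Matrix (Fin a) (Fin a) ℂ) ⊗ₖ W)ᴴ) := by
  have hKK : ((1 : Matrix (Fin a) (Fin a) ℂ) ⊗ₖ W)ᴴ * ((1 : Matrix (Fin a) (Fin a) ℂ) ⊗ₖ W)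
      = 1 := by
    rw [one_kron_conjT, ← Matrix.mul_kronecker_mul, hW, one_mul, Matrix.one_kronecker_one]
  refine ⟨⟨⟨fun X Y => by rw [Matrix.mul_add, Matrix.add_mul],
      fun c X => by rw [Matrix.mul_smul, Matrix.smul_mul]⟩, ?_, ?_⟩, ?_, ?_⟩
  · intro X
    rw [Matrix.trace_mul_cycle, hKK, one_mul]
  · exact choi_kraus_psd _
  · intro ρB hρB
    refine ⟨W * ρB * Wᴴ, ⟨hρB.1.mul_mul_conjTranspose_same W, ?_⟩, ?_⟩
    · rw [Matrix.trace_mul_cycle, hW, one_mul, hρB.2]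
    · beta_reduce
      rw [one_kron_conjT, ← Matrix.mul_kronecker_mul, ← Matrix.mul_kronecker_mul,
        one_mul, mul_one]
  · intro M hM X
    rw [trA_conj, trA_conj, trA_tensorIdRight M hM.2.1]

/-- The completion channel used in the reverse direction. -/
def backMap (a' : ℕ) {b b' : ℕ} (W : Matrix (Fin b') (Fin b) ℂ) :
    Matrix (Fin a' × Fin b') (Fin a' × Fin b') ℂ →
      Matrix (Fin a' × Fin b) (Fin a' × Fin b) ℂ :=
  fun X => ((1 : Matrix (Fin a') (Fin a') ℂ) ⊗ₖ Wᴴ) * X *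
      ((1 : Matrix (Fin a') (Fin a') ℂ) ⊗ₖ Wᴴ)ᴴ +
    ((((1 : Matrix (Fin a' × Fin b') (Fin a' × Fin b') ℂ) -
        (1 : Matrix (Fin a') (Fin a') ℂ) ⊗ₖ (W * Wᴴ)) * X).trace) • (unif a' ⊗ₖ unif b)

lemma backMap_c_eq {a' b b' : ℕ} (W : Matrix (Fin b') (Fin b) ℂ)
    (X : Matrix (Fin a' × Fin b') (Fin a' × Fin b') ℂ) :
    ((((1 : Matrix (Fin a' × Fin b') (Fin a' × Fin b') ℂ) -
        (1 : Matrix (Fin a') (Fin a') ℂ) ⊗ₖ (W * Wᴴ)) * X).trace)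
      = (trA X).trace - ((W * Wᴴ) * trA X).trace := by
  rw [Matrix.sub_mul, Matrix.trace_sub, one_mul, trace_one_kron_mul, trace_trA]

lemma lb_back {a' b b' : ℕ} (ha' : 0 < a') (hb : 0 < b)
    (W : Matrix (Fin b') (Fin b) ℂ) (hW : Wᴴ * W = 1) :
    LocallyBalanced (backMap a' W) := by
  set Q := W * Wᴴ with hQdef
  have hQh : Qᴴ = Q := by rw [hQdef, Matrix.conjTranspose_mul, Matrix.conjTranspose_conjTranspose]
  have hQQ : Q * Q = Q := by
    rw [hQdef]
    simp only [Matrix.mul_assoc]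
    rw [← Matrix.mul_assoc Wᴴ W Wᴴ, hW, Matrix.one_mul]
  have hs : IsState ((unif a' ⊗ₖ unif b : Matrix (Fin a' × Fin b) (Fin a' × Fin b) ℂ)) := by
    refine ⟨kron_psd (unif_isState ha').1 (unif_isState hb).1, ?_⟩
    rw [Matrix.trace_kronecker, trace_unif ha', trace_unif hb, one_mul]
  have hP : ((1 : Matrix (Fin a' × Fin b') (Fin a' × Fin b') ℂ) -
      (1 : Matrix (Fin a') (Fin a') ℂ) ⊗ₖ Q).PosSemidef := by
    have hPh : ((1 : Matrix (Fin a' × Fin b') (Fin a' × Fin b') ℂ) -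
        (1 : Matrix (Fin a') (Fin a') ℂ) ⊗ₖ Q)ᴴ = 1 - (1 : Matrix (Fin a') (Fin a') ℂ) ⊗ₖ Q := by
      rw [Matrix.conjTranspose_sub, Matrix.conjTranspose_one, kron_conjT,
        Matrix.conjTranspose_one, hQh]
    refine posSemidef_iff_eq_ct_mul_self.mpr
      ⟨1 - (1 : Matrix (Fin a') (Fin a') ℂ) ⊗ₖ Q, ?_⟩
    rw [hPh, Matrix.sub_mul, Matrix.mul_sub, Matrix.mul_sub, one_mul, mul_one,
      ← Matrix.mul_kronecker_mul, hQQ, one_mul]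
    simp only [Matrix.one_mul]
    abel
  have hPb : ((1 : Matrix (Fin b') (Fin b') ℂ) - Q).PosSemidef := by
    refine posSemidef_iff_eq_ct_mul_self.mpr ⟨1 - Q, ?_⟩
    rw [Matrix.conjTranspose_sub, Matrix.conjTranspose_one, hQh, Matrix.sub_mul,
      Matrix.mul_sub, Matrix.mul_sub, one_mul, mul_one, hQQ]
    simp only [Matrix.one_mul]
    abel
  have hKconj : ((1 : Matrix (Fin a') (Fin a') ℂ) ⊗ₖ Wᴴ)ᴴ =
      (1 : Matrix (Fin a') (Fin a') ℂ) ⊗ₖ W := by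
    rw [one_kron_conjT, Matrix.conjTranspose_conjTranspose]
  have htr : ∀ X : Matrix (Fin a' × Fin b') (Fin a' × Fin b') ℂ,
      (((1 : Matrix (Fin a') (Fin a') ℂ) ⊗ₖ Wᴴ) * X *
        ((1 : Matrix (Fin a') (Fin a') ℂ) ⊗ₖ Wᴴ)ᴴ).trace = (Q * trA X).trace := by
    intro X
    rw [Matrix.trace_mul_cycle, hKconj, ← Matrix.mul_kronecker_mul, Matrix.one_mul,
      trace_one_kron_mul]
  refine ⟨⟨⟨?_, ?_⟩, ?_, ?_⟩, ?_, ?_⟩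
  · intro X Y
    simp only [backMap, Matrix.mul_add, Matrix.add_mul, Matrix.trace_add, add_smul]
    abel
  · intro c X
    simp only [backMap, Matrix.mul_smul, Matrix.smul_mul, Matrix.trace_smul, smul_eq_mul,
      smul_add, smul_smul]
  · intro X
    simp only [backMap]
    rw [Matrix.trace_add, htr, Matrix.trace_smul, hs.2, smul_eq_mul, mul_one,
      backMap_c_eq, ← trace_trA X]
    ring
  · have hsplit : choiMatrix (backMap a' W) =
        choiMatrix (fun X => ((1 : Matrix (Fin a') (Fin a') ℂ) ⊗ₖ Wᴴ) * X *
          ((1 : Matrix (Fin a') (Fin a') ℂ) ⊗ₖ Wᴴ)ᴴ) +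
        choiMatrix (fun X => ((((1 : Matrix (Fin a' × Fin b') (Fin a' × Fin b') ℂ) -
          (1 : Matrix (Fin a') (Fin a') ℂ) ⊗ₖ Q) * X).trace) • (unif a' ⊗ₖ unif b)) :=
      choi_add _ _
    rw [hsplit]
    refine Matrix.PosSemidef.add (choi_kraus_psd _) ?_
    rw [choi_traceMap]
    exact kron_psd hP.transpose hs.1
  · intro ρB' hρ'
    set c₀ : ℂ := (((1 : Matrix (Fin b') (Fin b') ℂ) - Q) * ρB').trace with hc₀
    have hc₀' : c₀ = ρB'.trace - (Q * ρB').trace := by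
      rw [hc₀, Matrix.sub_mul, Matrix.trace_sub, Matrix.one_mul]
    have hc₀nn : 0 ≤ c₀ := psd_mul_trace_nonneg hPb hρ'.1
    have htrW : (Wᴴ * ρB' * W).trace = (Q * ρB').trace := by
      rw [Matrix.trace_mul_cycle, ← hQdef]
    refine ⟨Wᴴ * ρB' * W + c₀ • unif b, ⟨?_, ?_⟩, ?_⟩
    · refine Matrix.PosSemidef.add ?_ (psd_smul hc₀nn (unif_isState hb).1)
      have := hρ'.1.mul_mul_conjTranspose_same Wᴴ
      rwa [Matrix.conjTranspose_conjTranspose] at this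
    · rw [Matrix.trace_add, htrW, Matrix.trace_smul, trace_unif hb, smul_eq_mul, mul_one,
        hc₀', hρ'.2]
      ring
    · have hcpart : (((1 : Matrix (Fin a' × Fin b') (Fin a' × Fin b') ℂ) -
          (1 : Matrix (Fin a') (Fin a') ℂ) ⊗ₖ Q) * (unif a' ⊗ₖ ρB')).trace = c₀ := by
        rw [Matrix.sub_mul, Matrix.one_mul, ← Matrix.mul_kronecker_mul, Matrix.one_mul,
          Matrix.trace_sub, Matrix.trace_kronecker, Matrix.trace_kronecker,
          trace_unif ha', one_mul, one_mul, hc₀']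
      show ((1 : Matrix (Fin a') (Fin a') ℂ) ⊗ₖ Wᴴ) * (unif a' ⊗ₖ ρB') *
          ((1 : Matrix (Fin a') (Fin a') ℂ) ⊗ₖ Wᴴ)ᴴ + _ • (unif a' ⊗ₖ unif b) =
          unif a' ⊗ₖ (Wᴴ * ρB' * W + c₀ • unif b)
      rw [hcpart, hKconj, ← Matrix.mul_kronecker_mul, ← Matrix.mul_kronecker_mul,
        Matrix.one_mul, Matrix.mul_one, Matrix.kronecker_add, Matrix.kronecker_smul]
  · intro M hM X
    have key : ∀ Y, trA (backMap a' W Y) = Wᴴ * trA Y * W +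
        ((trA Y).trace - (Q * trA Y).trace) • trA (unif a' ⊗ₖ unif b) := by
      intro Y
      simp only [backMap]
      rw [trA_add, trA_smul, trA_conj, Matrix.conjTranspose_conjTranspose, backMap_c_eq]
    rw [key, key, trA_tensorIdRight M hM.2.1]
end Aux

/-- Every conditional entropy is invariant under local isometric channels. -/
theorem condEntropy_local_isometry_invariant (E : CondEntropy) (a b a' b' : ℕ)
    (ρ : Matrix (Fin a × Fin b) (Fin a × Fin b) ℂ) (hρ : IsState ρ)
    (V : Matrix (Fin a') (Fin a) ℂ) (hV : Vᴴ * V = 1)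
    (W : Matrix (Fin b') (Fin b) ℂ) (hW : Wᴴ * W = 1) :
    E.H a' b' ((V ⊗ₖ W) * ρ * (V ⊗ₖ W)ᴴ) = E.H a b ρ := by
  obtain ⟨ha, hb⟩ := pos_dims hρ
  have haa' : a ≤ a' := isometry_dim_le V hV
  have ha' : 0 < a' := lt_of_lt_of_le ha haa'
  set σ := (V ⊗ₖ W) * ρ * (V ⊗ₖ W)ᴴ with hσdef
  have hVW : (V ⊗ₖ W)ᴴ * (V ⊗ₖ W) = 1 := by
    rw [kron_conjT, ← Matrix.mul_kronecker_mul, hV, hW, Matrix.one_kronecker_one]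
  have hσ : IsState σ := ⟨hρ.1.mul_mul_conjTranspose_same _, by
    rw [hσdef, Matrix.trace_mul_cycle, hVW, Matrix.one_mul, hρ.2]⟩
  have h1 : E.H a b ρ ≤ E.H a' b' σ := by
    apply E.mono a b a' b' ρ σ hρ hσ
    left
    refine ⟨haa', V, fun X => ((1 : Matrix (Fin a) (Fin a) ℂ) ⊗ₖ W) * X *
      ((1 : Matrix (Fin a) (Fin a) ℂ) ⊗ₖ W)ᴴ, hV, lb_kraus W hW, ?_⟩
    have hk : (V ⊗ₖ (1 : Matrix (Fin b') (Fin b') ℂ)) *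
        ((1 : Matrix (Fin a) (Fin a) ℂ) ⊗ₖ W) = V ⊗ₖ W := by
      rw [← Matrix.mul_kronecker_mul, Matrix.mul_one, Matrix.one_mul]
    rw [hσdef, ← hk, Matrix.conjTranspose_mul]
    simp only [Matrix.mul_assoc]
  have h2 : E.H a' b' σ ≤ E.H a b ρ := by
    apply E.mono a' b' a b σ ρ hσ hρ
    right
    refine ⟨haa', V, backMap a' W, hV, lb_back ha' hb W hW, ?_⟩
    have hQW : (W * Wᴴ) * W = W := by rw [Matrix.mul_assoc, hW, Matrix.mul_one]
    have hKV : ((1 : Matrix (Fin a') (Fin a') ℂ) ⊗ₖ Wᴴ) * (V ⊗ₖ W) =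
        V ⊗ₖ (1 : Matrix (Fin b) (Fin b) ℂ) := by
      rw [← Matrix.mul_kronecker_mul, Matrix.one_mul, hW]
    have hQV : ((1 : Matrix (Fin a') (Fin a') ℂ) ⊗ₖ (W * Wᴴ)) * (V ⊗ₖ W) = V ⊗ₖ W := by
      rw [← Matrix.mul_kronecker_mul, Matrix.one_mul, hQW]
    have hfirst : ((1 : Matrix (Fin a') (Fin a') ℂ) ⊗ₖ Wᴴ) * σ *
        ((1 : Matrix (Fin a') (Fin a') ℂ) ⊗ₖ Wᴴ)ᴴ =
        (V ⊗ₖ (1 : Matrix (Fin b) (Fin b) ℂ)) * ρ *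
          (V ⊗ₖ (1 : Matrix (Fin b) (Fin b) ℂ))ᴴ := by
      rw [hσdef, ← hKV, Matrix.conjTranspose_mul]
      simp only [Matrix.mul_assoc]
    have hctrace : ((((1 : Matrix (Fin a' × Fin b') (Fin a' × Fin b') ℂ) -
        (1 : Matrix (Fin a') (Fin a') ℂ) ⊗ₖ (W * Wᴴ)) * σ)).trace = 0 := by
      have hfix : ((1 : Matrix (Fin a') (Fin a') ℂ) ⊗ₖ (W * Wᴴ)) * σ = σ := by
        rw [hσdef]
        simp only [← Matrix.mul_assoc]
        rw [hQV]
      rw [Matrix.sub_mul, Matrix.one_mul, Matrix.trace_sub, hfix, sub_self]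
    show _ = backMap a' W σ
    simp only [backMap]
    rw [hfirst, hctrace, zero_smul, add_zero]
  exact le_antisymm h2 h1
end
end
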